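/- Randomized rounding / integral decomposition: for any p' : [n] → [0,1] with Σ_{i=1}^{n} p'_i = ℓ (ℓ a positive integer, ℓ ≤ n), there exists a probability distribution p over ℓ-element subsets of [n] whose marginals are exactly p', i.e., Σ_{S : i ∈ S} p(S) = p'_i for every i ∈ [n]. -/

import Mathlib

open Finset

lemma integral_case12 (n ℓ : ℕ) (p' : Fin n → ℝ)
    (hsum : ∑ i, p' i = ℓ) (hint : ∀ i, p' i = 0 ∨ p' i = 1) :
    ∃ p : Finset (Fin n) → ℝ,
      (∀ S, 0 ≤ p S) ∧ (∀ S, S.card ≠ ℓ → p S = 0) ∧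
      (∑ S : Finset (Fin n), p S) = 1 ∧
      (∀ i : Fin n, ∑ S ∈ univ.filter (fun S : Finset (Fin n) => i ∈ S), p S = p' i) := by
  set T : Finset (Fin n) := univ.filter (fun i => p' i = 1) with hT
  have hmemT : ∀ i, i ∈ T ↔ p' i = 1 := by intro i; simp [hT]
  have hsumT : ∑ i, p' i = T.card := by
    have h1 : ∑ i ∈ T, p' i = T.card := by
      rw [Finset.sum_congr rfl (fun i hi => (hmemT i).mp hi)]; simp
    have h2 : ∑ i ∈ Tᶜ, p' i = 0 := Finset.sum_eq_zero fun i hi => by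
      rcases hint i with h | h
      · exact h
      · exact absurd ((hmemT i).mpr h) (Finset.mem_compl.mp hi)
    rw [← Finset.sum_add_sum_compl T p', h1, h2, add_zero]
  have hcardT : T.card = ℓ := by
    have : (T.card : ℝ) = (ℓ : ℝ) := by rw [← hsumT, hsum]
    exact_mod_cast this
  refine ⟨fun S => if S = T then 1 else 0, ?_, ?_, ?_, ?_⟩
  · intro S; dsimp only; split <;> norm_num
  · intro S hS; dsimp only; rw [if_neg]; rintro rfl; exact hS hcardT
  · simp
  · intro i
    rw [Finset.sum_ite_eq' _ T (fun _ => (1:ℝ))]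
    by_cases hiT : i ∈ T
    · simp [hiT, (hmemT i).mp hiT]
    · have : p' i = 0 := by
        rcases hint i with h | h
        · exact h
        · exact absurd ((hmemT i).mpr h) hiT
      simp [hiT, this]

lemma aux12 (n ℓ : ℕ) : ∀ (k : ℕ) (p' : Fin n → ℝ),
    (∀ i, 0 ≤ p' i) → (∀ i, p' i ≤ 1) → (∑ i, p' i = ℓ) →
    (univ.filter (fun i => p' i ≠ 0 ∧ p' i ≠ 1)).card ≤ k →
    ∃ p : Finset (Fin n) → ℝ,
      (∀ S, 0 ≤ p S) ∧ (∀ S, S.card ≠ ℓ → p S = 0) ∧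
      (∑ S : Finset (Fin n), p S) = 1 ∧
      (∀ i : Fin n, ∑ S ∈ univ.filter (fun S : Finset (Fin n) => i ∈ S), p S = p' i) := by
  intro k
  induction k with
  | zero =>
    intro p' hp0 hp1 hsum hcard
    refine integral_case12 n ℓ p' hsum fun i => ?_
    by_contra h
    push_neg at h
    have hmem : i ∈ univ.filter (fun i => p' i ≠ 0 ∧ p' i ≠ 1) := by simp [h.1, h.2]
    have := Finset.card_pos.mpr ⟨i, hmem⟩
    omega
  | succ k ih =>
    intro p' hp0 hp1 hsum hcard
    by_cases hint : ∀ i, p' i = 0 ∨ p' i = 1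
    · exact integral_case12 n ℓ p' hsum hint
    push_neg at hint
    obtain ⟨i, hi0, hi1⟩ := hint
    have h0i : 0 < p' i := lt_of_le_of_ne (hp0 i) (Ne.symm hi0)
    have h1i : p' i < 1 := lt_of_le_of_ne (hp1 i) hi1
    -- there is a second fractional coordinate
    have hj : ∃ j, j ≠ i ∧ p' j ≠ 0 ∧ p' j ≠ 1 := by
      by_contra h
      push_neg at h
      set U : Finset (Fin n) := (univ.erase i).filter (fun j => p' j = 1) with hU
      have hsplit : ∑ x ∈ univ.erase i, p' x = U.card := by
        have h1 : ∑ x ∈ U, p' x = U.card := by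
          rw [Finset.sum_congr rfl (fun x hx => (Finset.mem_filter.mp hx).2)]; simp [hU]
        have h2 : ∑ x ∈ (univ.erase i).filter (fun j => ¬ p' j = 1), p' x = 0 :=
          Finset.sum_eq_zero fun x hx => by
            obtain ⟨hx1, hx2⟩ := Finset.mem_filter.mp hx
            rcases eq_or_ne (p' x) 0 with h' | h'
            · exact h'
            · exact absurd (h x (Finset.ne_of_mem_erase hx1) h') hx2
        rw [← Finset.sum_filter_add_sum_filter_not (univ.erase i) (fun j => p' j = 1) p',
          h1, h2, add_zero, hU]
      have htotal : p' i + (U.card : ℝ) = ℓ := by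
        rw [← hsplit, Finset.add_sum_erase _ p' (Finset.mem_univ i), hsum]
      have hlt : (U.card : ℝ) < ℓ := by linarith
      have hlt' : U.card < ℓ := by exact_mod_cast hlt
      have : (U.card : ℝ) + 1 ≤ ℓ := by exact_mod_cast hlt'
      linarith
    obtain ⟨j, hji, hj0, hj1⟩ := hj
    have hij : i ≠ j := fun h => hji h.symm
    have h0j : 0 < p' j := lt_of_le_of_ne (hp0 j) (Ne.symm hj0)
    have h1j : p' j < 1 := lt_of_le_of_ne (hp1 j) hj1
    set t1 : ℝ := min (1 - p' i) (p' j) with ht1def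
    set t2 : ℝ := min (p' i) (1 - p' j) with ht2def
    have ht1 : 0 < t1 := lt_min (by linarith) h0j
    have ht2 : 0 < t2 := lt_min h0i (by linarith)
    have ht1a : t1 ≤ 1 - p' i := min_le_left _ _
    have ht1b : t1 ≤ p' j := min_le_right _ _
    have ht2a : t2 ≤ p' i := min_le_left _ _
    have ht2b : t2 ≤ 1 - p' j := min_le_right _ _
    set q : Fin n → ℝ := fun x => if x = i then p' i + t1 else if x = j then p' j - t1 else p' x with hqdef
    set r : Fin n → ℝ := fun x => if x = i then p' i - t2 else if x = j then p' j + t2 else p' x with hrdef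
    have hqi : q i = p' i + t1 := by simp [hqdef]
    have hqj : q j = p' j - t1 := by simp [hqdef, hji, hij]
    have hri : r i = p' i - t2 := by simp [hrdef]
    have hrj : r j = p' j + t2 := by simp [hrdef, hji, hij]
    have hqo : ∀ x, x ≠ i → x ≠ j → q x = p' x := by
      intro x h1 h2; simp [hqdef, h1, h2]
    have hro : ∀ x, x ≠ i → x ≠ j → r x = p' x := by
      intro x h1 h2; simp [hrdef, h1, h2]
    have hsplit : ∀ f : Fin n → ℝ, ∑ x, f x = f i + f j + ∑ x ∈ (univ.erase i).erase j, f x := by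
      intro f
      rw [← Finset.add_sum_erase _ f (Finset.mem_univ i),
        ← Finset.add_sum_erase _ f (Finset.mem_erase.mpr ⟨hji, Finset.mem_univ j⟩)]
      ring
    have hrest : ∀ f : Fin n → ℝ, (∀ x, x ≠ i → x ≠ j → f x = p' x) →
        ∑ x ∈ (univ.erase i).erase j, f x = ∑ x ∈ (univ.erase i).erase j, p' x := by
      intro f hf
      refine Finset.sum_congr rfl fun x hx => ?_
      obtain ⟨hx1, hx2⟩ := Finset.mem_erase.mp hx
      exact hf x (Finset.ne_of_mem_erase hx2) hx1
    have hqsum : ∑ x, q x = ℓ := by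
      rw [hsplit q, hrest q hqo, hqi, hqj]
      rw [hsplit p'] at hsum
      linarith
    have hrsum : ∑ x, r x = ℓ := by
      rw [hsplit r, hrest r hro, hri, hrj]
      rw [hsplit p'] at hsum
      linarith
    have hq0 : ∀ x, 0 ≤ q x := by
      intro x
      by_cases hx1 : x = i
      · subst hx1; rw [hqi]; linarith
      by_cases hx2 : x = j
      · subst hx2; rw [hqj]; linarith
      · rw [hqo x hx1 hx2]; exact hp0 x
    have hq1 : ∀ x, q x ≤ 1 := by
      intro x
      by_cases hx1 : x = i
      · subst hx1; rw [hqi]; linarith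
      by_cases hx2 : x = j
      · subst hx2; rw [hqj]; linarith
      · rw [hqo x hx1 hx2]; exact hp1 x
    have hr0 : ∀ x, 0 ≤ r x := by
      intro x
      by_cases hx1 : x = i
      · subst hx1; rw [hri]; linarith
      by_cases hx2 : x = j
      · subst hx2; rw [hrj]; linarith
      · rw [hro x hx1 hx2]; exact hp0 x
    have hr1 : ∀ x, r x ≤ 1 := by
      intro x
      by_cases hx1 : x = i
      · subst hx1; rw [hri]; linarith
      by_cases hx2 : x = j
      · subst hx2; rw [hrj]; linarith
      · rw [hro x hx1 hx2]; exact hp1 x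
    -- fractional sets shrink
    have hiP : i ∈ univ.filter (fun x => p' x ≠ 0 ∧ p' x ≠ 1) := by simp [hi0, hi1]
    have hjP : j ∈ univ.filter (fun x => p' x ≠ 0 ∧ p' x ≠ 1) := by simp [hj0, hj1]
    have hcard_lt : ∀ f : Fin n → ℝ, (∀ x, x ≠ i → x ≠ j → f x = p' x) →
        (∃ w, (w = i ∨ w = j) ∧ (f w = 0 ∨ f w = 1)) →
        (univ.filter (fun x => f x ≠ 0 ∧ f x ≠ 1)).card ≤ k := by
      intro f hf ⟨w, hw1, hw2⟩
      have hsub : univ.filter (fun x => f x ≠ 0 ∧ f x ≠ 1) ⊆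
          univ.filter (fun x => p' x ≠ 0 ∧ p' x ≠ 1) := by
        intro x hx
        obtain ⟨-, hx2⟩ := Finset.mem_filter.mp hx
        by_cases hx1 : x = i
        · subst hx1; exact hiP
        by_cases hx3 : x = j
        · subst hx3; exact hjP
        · rw [hf x hx1 hx3] at hx2
          simp [hx2.1, hx2.2]
      have hwP : w ∈ univ.filter (fun x => p' x ≠ 0 ∧ p' x ≠ 1) := by
        rcases hw1 with rfl | rfl
        · exact hiP
        · exact hjP
      have hwQ : w ∉ univ.filter (fun x => f x ≠ 0 ∧ f x ≠ 1) := by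
        simp only [Finset.mem_filter, not_and]
        rcases hw2 with h | h <;> simp [h]
      have := Finset.card_lt_card ((Finset.ssubset_iff_of_subset hsub).mpr ⟨w, hwP, hwQ⟩)
      omega
    have hqcard : (univ.filter (fun x => q x ≠ 0 ∧ q x ≠ 1)).card ≤ k := by
      refine hcard_lt q hqo ?_
      rcases le_total (1 - p' i) (p' j) with h | h
      · exact ⟨i, Or.inl rfl, Or.inr (by rw [hqi, ht1def, min_eq_left h]; ring)⟩
      · exact ⟨j, Or.inr rfl, Or.inl (by rw [hqj, ht1def, min_eq_right h]; ring)⟩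
    have hrcard : (univ.filter (fun x => r x ≠ 0 ∧ r x ≠ 1)).card ≤ k := by
      refine hcard_lt r hro ?_
      rcases le_total (p' i) (1 - p' j) with h | h
      · exact ⟨i, Or.inl rfl, Or.inl (by rw [hri, ht2def, min_eq_left h]; ring)⟩
      · exact ⟨j, Or.inr rfl, Or.inr (by rw [hrj, ht2def, min_eq_right h]; ring)⟩
    obtain ⟨pq, hpq0, hpqc, hpqs, hpqm⟩ := ih q hq0 hq1 hqsum hqcard
    obtain ⟨pr, hpr0, hprc, hprs, hprm⟩ := ih r hr0 hr1 hrsum hrcard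
    set lam : ℝ := t2 / (t1 + t2) with hlam
    have ht12 : 0 < t1 + t2 := by linarith
    have hlam0 : 0 ≤ lam := div_nonneg ht2.le ht12.le
    have hlam1 : lam ≤ 1 := by
      rw [hlam, div_le_one ht12]; linarith
    refine ⟨fun S => lam * pq S + (1 - lam) * pr S, ?_, ?_, ?_, ?_⟩
    · intro S
      dsimp only
      have h1l : 0 ≤ 1 - lam := by linarith
      exact add_nonneg (mul_nonneg hlam0 (hpq0 S)) (mul_nonneg h1l (hpr0 S))
    · intro S hS
      dsimp only
      rw [hpqc S hS, hprc S hS]; ring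
    · rw [Finset.sum_add_distrib, ← Finset.mul_sum, ← Finset.mul_sum, hpqs, hprs]; ring
    · intro x
      rw [Finset.sum_add_distrib, ← Finset.mul_sum, ← Finset.mul_sum, hpqm x, hprm x]
      by_cases hx1 : x = i
      · subst hx1
        rw [hqi, hri, hlam]
        field_simp
        ring
      by_cases hx2 : x = j
      · subst hx2
        rw [hqj, hrj, hlam]
        field_simp
        ring
      · rw [hqo x hx1 hx2, hro x hx1 hx2]; ring

/-- Randomized rounding: any `p' : [n] → [0,1]` with `∑ p' i = ℓ` (for a
positive integer `ℓ ≤ n`) arises as the marginals of a probability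
distribution over `ℓ`-element subsets of `[n]`. -/
theorem stmt_12 (n ℓ : ℕ) (hℓ1 : 1 ≤ ℓ) (hℓn : ℓ ≤ n) (p' : Fin n → ℝ)
    (hp0 : ∀ i, 0 ≤ p' i) (hp1 : ∀ i, p' i ≤ 1) (hsum : ∑ i, p' i = ℓ) :
    ∃ p : Finset (Fin n) → ℝ,
      (∀ S, 0 ≤ p S) ∧ (∀ S, S.card ≠ ℓ → p S = 0) ∧
      (∑ S : Finset (Fin n), p S) = 1 ∧
      (∀ i : Fin n, ∑ S ∈ univ.filter (fun S : Finset (Fin n) => i ∈ S), p S = p' i) := by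
  exact aux12 n ℓ (univ.filter (fun i => p' i ≠ 0 ∧ p' i ≠ 1)).card p' hp0 hp1 hsum le_rfl
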